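/- If dsol(A,B) = {y} and A^{−1}y is a singleton, then psol(A,B) = A^{−1}y. -/
import Mathlib


open Pointwise InnerProductSpace

variable {X : Type*} [NormedAddCommGroup X] [InnerProductSpace ℝ X]

/-- A set-valued operator `A : X ⇉ X` is monotone. -/
def SVMonotone (A : X → Set X) : Prop :=
  ∀ ⦃x y u v : X⦄, u ∈ A x → v ∈ A y → 0 ≤ ⟪x - y, u - v⟫_ℝ

/-- A set-valued operator is maximally monotone. -/
def SVMaxMonotone (A : X → Set X) : Prop :=
  SVMonotone A ∧ ∀ x u : X, (∀ y v, v ∈ A y → 0 ≤ ⟪x - y, u - v⟫_ℝ) → u ∈ A x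

/-- Set-valued inverse. -/
def SVInv (A : X → Set X) : X → Set X := fun u => {x | u ∈ A x}

/-- `B^∨ = (−Id) ∘ B ∘ (−Id)`. -/
def SVVee (B : X → Set X) : X → Set X := fun x => -(B (-x))

/-- `B^{−∨} = (B⁻¹)^∨`. -/
def SVInvVee (B : X → Set X) : X → Set X := SVVee (SVInv B)

/-- Primal Attouch–Théra solutions: `zer (A + B)`. -/
def psol (A B : X → Set X) : Set X := {x | (0 : X) ∈ A x + B x}

/-- Dual Attouch–Théra solutions: `zer (A⁻¹ + B^{−∨})`. -/
def dsol (A B : X → Set X) : Set X := {y | (0 : X) ∈ SVInv A y + SVInvVee B y}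

/-- If `dsol (A, B) = {y}` and `A⁻¹ y` is a singleton, then `psol (A, B) = A⁻¹ y`. -/
theorem psol_eq_Ainv_y (A B : X → Set X)
    (hA : SVMaxMonotone A) (hB : SVMaxMonotone B) (y : X)
    (hy : dsol A B = {y}) (hsingle : ∃ a : X, SVInv A y = {a}) :
    psol A B = SVInv A y := by
  obtain ⟨a, ha⟩ := hsingle
  ext x
  constructor
  · rintro hx
    obtain ⟨u, hu, v, hv, huv⟩ := hx
    have hv' : v = -u := by
      have := huv; exact eq_neg_of_add_eq_zero_right this
    have hud : u ∈ dsol A B := by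
      refine ⟨x, hu, -x, ?_, add_neg_cancel x⟩
      show -x ∈ -(SVInv B (-u))
      rw [Set.mem_neg, neg_neg]
      show -u ∈ B x
      rw [← hv']; exact hv
    have huy : u = y := by rwa [hy, Set.mem_singleton_iff] at hud
    show y ∈ A x
    rw [← huy]; exact hu
  · intro hx
    have hxa : x = a := by rwa [ha, Set.mem_singleton_iff] at hx
    have hyd : y ∈ dsol A B := by rw [hy]; exact rfl
    obtain ⟨x', hx', w, hw, hxw⟩ := hyd
    have hw' : w = -x' := eq_neg_of_add_eq_zero_right hxw
    have hBx' : -y ∈ B x' := by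
      rw [hw'] at hw
      have : -x' ∈ -(SVInv B (-y)) := hw
      rw [Set.mem_neg, neg_neg] at this
      exact this
    have hx'a : x' = a := by rwa [ha, Set.mem_singleton_iff] at hx'
    have hxx' : x = x' := by rw [hxa, hx'a]
    refine ⟨y, ?_, -y, ?_, add_neg_cancel y⟩
    · rw [hxx']; exact hx'
    · rw [hxx']; exact hBx'
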